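/- Let (sₖ) be a hermitian sequence whose Toeplitz determinants satisfy D₀ > 0, D₁ > 0, …, D_{n−1} > 0 and Dₙ = 0. Then the polynomial P(z) = det of the (n+1)×(n+1) matrix whose first row is (1, z, z², …, zⁿ) and whose subsequent rows are (s_{−j}, s_{−j+1}, …, s_{n−j}) for j = 0, …, n−1, has n roots α₁, …, αₙ that are all simple and of modulus 1. -/

import Mathlib

open Matrix Complex Polynomial ComplexOrder

noncomputable section

namespace Szego

variable (s : ℤ → ℂ)

def T (k : ℕ) : Matrix (Fin (k+1)) (Fin (k+1)) ℂ :=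
  Matrix.of (fun i j : Fin (k+1) => s ((j:ℤ) - (i:ℤ)))

variable {s}

lemma T_herm (hherm : ∀ k : ℤ, s (-k) = starRingEnd ℂ (s k)) (k : ℕ) :
    (T s k).IsHermitian := by
  have hst : ∀ m : ℤ, star (s m) = s (-m) := fun m => (hherm m).symm
  ext i j
  show star (s ((i:ℤ) - (j:ℤ))) = s ((j:ℤ) - (i:ℤ))
  rw [hst]
  congr 1; ring

lemma posDef_one_dim {M : Matrix (Fin 1) (Fin 1) ℂ} (h : 0 < M 0 0) : M.PosDef := by
  have hM : M = Matrix.diagonal (fun _ => M 0 0) := by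
    ext i j
    fin_cases i <;> fin_cases j <;> simp
  rw [hM]
  exact (Matrix.posDef_diagonal_iff).mpr (fun i => h)

lemma posDef_of_posSemidef_det {m : Type*} [Fintype m] [DecidableEq m] {M : Matrix m m ℂ}
    (h : M.PosSemidef) (hdet : M.det ≠ 0) : M.PosDef := by
  refine posDef_iff_dotProduct_mulVec.mpr ⟨h.1, fun x hx => lt_of_le_of_ne (h.dotProduct_mulVec_nonneg x) (Ne.symm (fun heq => hx ?_))⟩
  have h0 : M *ᵥ x = 0 := (h.dotProduct_mulVec_zero_iff x).mp heq
  have h1 : M⁻¹ *ᵥ (M *ᵥ x) = 0 := by rw [h0, Matrix.mulVec_zero]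
  rwa [Matrix.mulVec_mulVec, Matrix.nonsing_inv_mul M (isUnit_iff_ne_zero.mpr hdet),
    Matrix.one_mulVec] at h1

lemma posDef_submatrix_equiv {m l : Type*} [Fintype m] [DecidableEq m] [Fintype l] [DecidableEq l]
    {M : Matrix m m ℂ} (e : l ≃ m) (h : (M.submatrix e e).PosDef) : M.PosDef := by
  refine posDef_iff_dotProduct_mulVec.mpr ⟨(isHermitian_submatrix_equiv e).mp h.1, fun x hx => ?_⟩
  have hx' : (x ∘ e) ≠ 0 := by
    intro hc
    apply hx
    funext i
    have := congrFun hc (e.symm i)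
    simpa using this
  have hform := h.dotProduct_mulVec_pos hx'
  have key : ∀ i, (M.submatrix e e *ᵥ (x ∘ e)) i = (M *ᵥ x) (e i) := by
    intro i
    show ∑ j, M (e i) (e j) * x (e j) = ∑ j, M (e i) j * x j
    exact Equiv.sum_comp e (fun j => M (e i) j * x j)
  have heq : star (x ∘ e) ⬝ᵥ (M.submatrix e e *ᵥ (x ∘ e)) = star x ⬝ᵥ (M *ᵥ x) := by
    show ∑ i, star (x (e i)) * (M.submatrix e e *ᵥ (x ∘ e)) i = ∑ i, star (x i) * (M *ᵥ x) i
    rw [← Equiv.sum_comp e (fun i => star (x i) * (M *ᵥ x) i)]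
    exact Finset.sum_congr rfl (fun i _ => by rw [key])
  rwa [heq] at hform

lemma sylvester (hherm : ∀ k : ℤ, s (-k) = starRingEnd ℂ (s k)) :
    ∀ k : ℕ, (∀ j, j ≤ k → 0 < ((T s j).det).re) → (T s k).PosDef := by
  have hst : ∀ m : ℤ, star (s m) = s (-m) := fun m => (hherm m).symm
  intro k
  induction k with
  | zero =>
    intro h
    apply posDef_one_dim (M := T s 0)
    have hentry : T s 0 0 0 = s 0 := by simp [T]
    have hdet : (T s 0).det = s 0 := by rw [det_fin_one, hentry]
    have him : (s 0).im = 0 := by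
      have h0 := hherm 0
      rw [neg_zero] at h0
      exact Complex.conj_eq_iff_im.mp h0.symm
    rw [hentry, Complex.lt_def]
    refine ⟨?_, by simp [him]⟩
    have h1 := h 0 le_rfl
    rw [hdet] at h1
    simpa using h1
  | succ k ih =>
    intro h
    have Hk : (T s k).PosDef := ih (fun j hj => h j (Nat.le_succ_of_le hj))
    have hermk1 : (T s (k+1)).IsHermitian := T_herm hherm (k+1)
    have hdk : 0 < (T s k).det := Hk.det_pos
    have hdkne : (T s k).det ≠ 0 := hdk.ne'
    have hdk1im : ((T s (k+1)).det).im = 0 := by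
      have h1 : star ((T s (k+1)).det) = (T s (k+1)).det := by
        conv_rhs => rw [← hermk1]
        rw [det_conjTranspose]
      exact Complex.conj_eq_iff_im.mp h1
    have hdk1 : 0 < (T s (k+1)).det := by
      rw [Complex.lt_def]
      exact ⟨by simpa using h (k+1) le_rfl, by simp [hdk1im]⟩
    set A := T s k with hA
    set B : Matrix (Fin (k+1)) (Fin 1) ℂ := Matrix.of (fun i _ => s ((k+1 : ℤ) - (i:ℤ))) with hB
    set d : Matrix (Fin 1) (Fin 1) ℂ := Matrix.of (fun _ _ => s 0) with hd
    have hblock : (T s (k+1)).submatrix finSumFinEquiv finSumFinEquiv = fromBlocks A B Bᴴ d := by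
      ext i j
      rcases i with i | i <;> rcases j with j | j <;>
        simp only [submatrix_apply, finSumFinEquiv_apply_left, finSumFinEquiv_apply_right,
          fromBlocks_apply₁₁, fromBlocks_apply₁₂, fromBlocks_apply₂₁, fromBlocks_apply₂₂,
          T, hA, hB, hd, Matrix.of_apply, conjTranspose_apply, Fin.coe_castAdd, Fin.coe_natAdd,
          Fin.val_eq_zero] <;>
        (try rw [hst]) <;>
        (first | rfl | (congr 1; push_cast; ring))
    haveI : Invertible A := Hk.isUnit.invertible
    have hdetblock : (fromBlocks A B Bᴴ d).det = (T s (k+1)).det := by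
      rw [← hblock, det_submatrix_equiv_self]
    have hdetfact : (fromBlocks A B Bᴴ d).det = A.det * (d - Bᴴ * A⁻¹ * B).det := by
      rw [det_fromBlocks₁₁, invOf_eq_nonsing_inv]
    set S := d - Bᴴ * A⁻¹ * B with hS
    have hSdet : S.det = (T s (k+1)).det / A.det := by
      rw [eq_div_iff hdkne, mul_comm, ← hdetfact, hdetblock]
    have hSpos : 0 < S 0 0 := by
      rw [← det_fin_one S, hSdet]
      have hAre : A.det = ((A.det).re : ℂ) := by
        apply Complex.ext
        · simp
        · simpa using (Complex.lt_def.mp hdk).2.symm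
      have hKre : (T s (k+1)).det = (((T s (k+1)).det).re : ℂ) := by
        apply Complex.ext
        · simp
        · simp [hdk1im]
      rw [hKre, hAre, ← Complex.ofReal_div, Complex.lt_def]
      constructor
      · simp only [Complex.ofReal_re, Complex.zero_re]
        have h1 : 0 < ((T s (k+1)).det).re := by simpa using (Complex.lt_def.mp hdk1).1
        have h2 : 0 < (A.det).re := by simpa using (Complex.lt_def.mp hdk).1
        positivity
      · simp
    have hsemi : (fromBlocks A B Bᴴ d).PosSemidef := by
      rw [PosDef.fromBlocks₁₁ B d Hk]
      exact (posDef_one_dim hSpos).posSemidef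
    have hPD : (fromBlocks A B Bᴴ d).PosDef :=
      posDef_of_posSemidef_det hsemi (by rw [hdetblock]; exact hdk1.ne')
    exact posDef_submatrix_equiv finSumFinEquiv (hblock ▸ hPD)

end Szego

namespace Szego

variable (s) in
def Phi (N : ℕ) (f g : Fin (N+1) → ℂ) : ℂ := star f ⬝ᵥ ((T s N) *ᵥ g)

lemma Phi_eq (N : ℕ) (f g : Fin (N+1) → ℂ) :
    Phi s N f g = ∑ i : Fin (N+1), ∑ j : Fin (N+1), star (f i) * (s ((j:ℤ) - (i:ℤ)) * g j) := by
  simp [Phi, dotProduct, mulVec, T, Finset.mul_sum]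

lemma Phi_sub₂ (N : ℕ) (f g h : Fin (N+1) → ℂ) (c : ℂ) :
    Phi s N f (g - c • h) = Phi s N f g - c * Phi s N f h := by
  simp only [Phi, Matrix.mulVec_sub, Matrix.mulVec_smul, dotProduct_sub,
    dotProduct_smul, smul_eq_mul]

lemma Phi_sub₁ (N : ℕ) (f g h : Fin (N+1) → ℂ) (c : ℂ) :
    Phi s N (f - c • h) g = Phi s N f g - star c * Phi s N h g := by
  simp only [Phi, star_sub, star_smul, sub_dotProduct, smul_dotProduct,
    smul_eq_mul]

def sh (N : ℕ) (f : Fin (N+1) → ℂ) : Fin (N+1) → ℂ :=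
  fun i => Fin.cases 0 (fun j => f (Fin.castSucc j)) i

@[simp] lemma sh_zero (N : ℕ) (f : Fin (N+1) → ℂ) : sh N f 0 = 0 := rfl

@[simp] lemma sh_succ (N : ℕ) (f : Fin (N+1) → ℂ) (j : Fin N) :
    sh N f (Fin.succ j) = f (Fin.castSucc j) := by simp [sh]

lemma Phi_sh_sh (N : ℕ) (f g : Fin (N+1) → ℂ) (hf : f (Fin.last N) = 0)
    (hg : g (Fin.last N) = 0) : Phi s N (sh N f) (sh N g) = Phi s N f g := by
  rw [Phi_eq, Phi_eq]
  have L : ∀ i : Fin (N+1), ∑ j : Fin (N+1), star (sh N f i) * (s ((j:ℤ) - (i:ℤ)) * sh N g j)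
      = star (sh N f i) * ∑ j : Fin N,
          (s (((j:ℤ)+1) - (i:ℤ)) * g (Fin.castSucc j)) := by
    intro i
    rw [Finset.mul_sum, Fin.sum_univ_succ]
    simp only [sh_zero, sh_succ, mul_zero, zero_add]
    refine Finset.sum_congr rfl (fun j _ => ?_)
    have hc : ((Fin.succ j : Fin (N+1)) : ℤ) = (j:ℤ) + 1 := by
      push_cast [Fin.val_succ]; ring
    rw [hc]
  rw [Fin.sum_univ_succ]
  simp only [sh_zero, star_zero, zero_mul, Finset.sum_const_zero, zero_add]
  rw [Fin.sum_univ_castSucc (n := N)]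
  simp only [hf, star_zero, zero_mul, Finset.sum_const_zero, add_zero]
  refine Finset.sum_congr rfl (fun i _ => ?_)
  rw [L]
  rw [Fin.sum_univ_castSucc (n := N)]
  simp only [hg, mul_zero, add_zero]
  rw [sh_succ, Finset.mul_sum]
  refine Finset.sum_congr rfl (fun j _ => ?_)
  have hc : ((j:ℤ) + 1) - ((Fin.succ i : Fin (N+1)) : ℤ)
      = ((Fin.castSucc j : Fin (N+1)) : ℤ) - ((Fin.castSucc i : Fin (N+1)) : ℤ) := by
    push_cast [Fin.coe_castSucc, Fin.val_succ]; ring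
  rw [hc]

lemma Phi_pos {m : ℕ} (hherm : ∀ k : ℤ, s (-k) = starRingEnd ℂ (s k))
    (hpos : ∀ j, j ≤ m → 0 < ((T s j).det).re) (f : Fin (m+2) → ℂ)
    (hf0 : f (Fin.last (m+1)) = 0) (hfne : f ≠ 0) : Phi s (m+1) f f ≠ 0 := by
  have PD := sylvester hherm m hpos
  set g : Fin (m+1) → ℂ := fun i => f (Fin.castSucc i) with hg
  have hgne : g ≠ 0 := by
    intro hc
    apply hfne
    funext i
    refine Fin.lastCases ?_ ?_ i
    · exact hf0
    · intro j
      exact congrFun hc j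
  have hform := PD.dotProduct_mulVec_pos hgne
  have hPhig : Phi s m g g = star g ⬝ᵥ (T s m *ᵥ g) := rfl
  have heq : Phi s (m+1) f f = Phi s m g g := by
    rw [Phi_eq, Phi_eq]
    rw [Fin.sum_univ_castSucc (n := m+1)]
    simp only [hf0, star_zero, zero_mul, Finset.sum_const_zero, add_zero]
    refine Finset.sum_congr rfl (fun i _ => ?_)
    rw [Fin.sum_univ_castSucc (n := m+1)]
    simp only [hf0, mul_zero, add_zero]
    refine Finset.sum_congr rfl (fun j _ => ?_)
    simp only [hg, Fin.coe_castSucc]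
  rw [heq, hPhig]
  exact hform.ne'

end Szego

open Szego Polynomial in
set_option maxHeartbeats 1000000 in
theorem toeplitz_polynomial_roots (n : ℕ) (hn : 0 < n) (s : ℤ → ℂ)
    (hherm : ∀ k : ℤ, s (-k) = starRingEnd ℂ (s k))
    (D : ℕ → ℂ)
    (hD : ∀ k : ℕ, D k = Matrix.det (Matrix.of (fun i j : Fin (k+1) => s ((j:ℤ) - (i:ℤ)))))
    (hpos : ∀ k : ℕ, k < n → 0 < (D k).re)
    (hzero : D n = 0)
    (P : ℂ → ℂ)
    (hP : ∀ z : ℂ, P z = Matrix.det (Matrix.of (fun i j : Fin (n+1) =>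
      if i = 0 then z ^ (j:ℕ) else s ((j:ℤ) - ((i:ℤ) - 1))))) :
    ∃ (α : Fin n → ℂ) (cst : ℂ), cst ≠ 0 ∧ Function.Injective α ∧
      (∀ r : Fin n, ‖α r‖ = 1) ∧
      ∀ z : ℂ, P z = cst * ∏ r : Fin n, (z - α r) := by
  obtain ⟨m, rfl⟩ : ∃ m, n = m + 1 := ⟨n - 1, (Nat.succ_pred_eq_of_pos hn).symm⟩
  -- determinant facts
  have hdetT : ∀ k : ℕ, (T s k).det = D k := fun k => (hD k).symm
  have hTpos : ∀ j, j ≤ m → 0 < ((T s j).det).re := by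
    intro j hj
    rw [hdetT]
    exact hpos j (by omega)
  have hdetTn : (T s (m+1)).det = 0 := by rw [hdetT]; exact hzero
  -- the permuted matrix A
  set σ : Equiv.Perm (Fin (m+2)) := Equiv.subRight 1 with hσ
  set A : Matrix (Fin (m+2)) (Fin (m+2)) ℂ := (T s (m+1)).submatrix σ id with hA
  have hdetA : A.det = 0 := by
    rw [hA, Matrix.det_permute, hdetTn, mul_zero]
  set Mv : Fin (m+2) → ℂ := fun j => A.adjugate j 0 with hMv
  -- T_n applied to Mv is zero
  have hTnM : (T s (m+1)) *ᵥ Mv = 0 := by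
    funext i
    have h1 : ((T s (m+1)) *ᵥ Mv) i = (A * A.adjugate) (σ.symm i) 0 := by
      simp only [Matrix.mul_apply, Matrix.mulVec, dotProduct]
      refine Finset.sum_congr rfl (fun j _ => ?_)
      rw [hA, Matrix.submatrix_apply, Equiv.apply_symm_apply, id_eq]
    rw [h1, Matrix.mul_adjugate, hdetA, zero_smul]
    rfl
  -- value of Mv at the last index
  have hMvlast : Mv (Fin.last (m+1)) = (-1)^(m+1) * D m := by
    have hstep : Mv (Fin.last (m+1)) = A.adjugate (Fin.last (m+1)) 0 := by rw [hMv]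
    rw [hstep, Matrix.adjugate_apply]
    set Au := A.updateRow 0 (Pi.single (Fin.last (m+1)) 1) with hAu
    rw [Matrix.det_succ_row_zero, Finset.sum_eq_single (Fin.last (m+1))]
    · have h0 : Au 0 (Fin.last (m+1)) = 1 := by
        rw [hAu, Matrix.updateRow_apply, if_pos rfl]
        simp
      rw [h0]
      have hsub : Au.submatrix Fin.succ (Fin.last (m+1)).succAbove = T s m := by
        ext i j
        rw [Matrix.submatrix_apply]
        have hs : (Fin.last (m+1)).succAbove j = Fin.castSucc j := by
          rw [Fin.succAbove_last]
        rw [hs, hAu, Matrix.updateRow_apply, if_neg (Fin.succ_ne_zero i),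
          hA, Matrix.submatrix_apply, id_eq]
        show s _ = s _
        congr 1
        have h1 : (σ (Fin.succ i) : Fin (m+2)) = Fin.castSucc i := by
          show Fin.succ i - 1 = Fin.castSucc i
          rw [sub_eq_iff_eq_add]
          exact Fin.coeSucc_eq_succ.symm
        rw [h1]
        push_cast [Fin.coe_castSucc]
        ring
      rw [hsub, hdetT]
      simp [Fin.val_last]
    · intro j _ hj
      have h0 : Au 0 j = 0 := by
        rw [hAu, Matrix.updateRow_apply, if_pos rfl]
        exact Pi.single_eq_of_ne hj 1
      rw [h0]
      ring
    · intro h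
      exact absurd (Finset.mem_univ _) h
  have hDm : D m ≠ 0 := by
    intro hc
    have := hpos m (by omega)
    rw [hc] at this
    simp at this
  have hMvlast_ne : Mv (Fin.last (m+1)) ≠ 0 := by
    rw [hMvlast]
    exact mul_ne_zero (pow_ne_zero _ (by norm_num)) hDm
  -- the polynomial
  set p : Polynomial ℂ := ∑ j : Fin (m+2), Polynomial.C (Mv j) * Polynomial.X ^ (j : ℕ) with hp
  have hcoeff : ∀ i : Fin (m+2), p.coeff (i : ℕ) = Mv i := by
    intro i
    rw [hp, Polynomial.finset_sum_coeff]
    have : ∀ j : Fin (m+2), (Polynomial.C (Mv j) * Polynomial.X ^ (j:ℕ)).coeff (i:ℕ)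
        = if j = i then Mv j else 0 := by
      intro j
      rw [Polynomial.coeff_C_mul, Polynomial.coeff_X_pow]
      by_cases h : j = i
      · subst h; simp
      · rw [if_neg h, if_neg (fun hc => h (Fin.val_injective hc).symm), mul_zero]
    rw [Finset.sum_congr rfl (fun j _ => this j), Finset.sum_ite_eq' Finset.univ i Mv,
      if_pos (Finset.mem_univ i)]
  have hcoeff_hi : ∀ k : ℕ, m + 1 < k → p.coeff k = 0 := by
    intro k hk
    rw [hp, Polynomial.finset_sum_coeff]
    refine Finset.sum_eq_zero (fun j _ => ?_)
    rw [Polynomial.coeff_C_mul, Polynomial.coeff_X_pow, if_neg (by have := j.isLt; omega),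
      mul_zero]
  have hpcoeff_top : p.coeff (m+1) = Mv (Fin.last (m+1)) := by
    have := hcoeff (Fin.last (m+1))
    rwa [Fin.val_last] at this
  have hpne : p ≠ 0 := fun hc => hMvlast_ne (by rw [← hpcoeff_top, hc, Polynomial.coeff_zero])
  have hpdeg : p.natDegree = m + 1 := by
    have h1 : p.natDegree ≤ m + 1 := Polynomial.natDegree_le_iff_coeff_eq_zero.mpr hcoeff_hi
    have h2 : m + 1 ≤ p.natDegree :=
      Polynomial.le_natDegree_of_ne_zero (hpcoeff_top ▸ hMvlast_ne)
    omega
  -- P z = p.eval z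
  have hPeval : ∀ z : ℂ, P z = p.eval z := by
    intro z
    rw [hP z]
    have hmat : (Matrix.of (fun i j : Fin (m+1+1) =>
        if i = 0 then z ^ (j:ℕ) else s ((j:ℤ) - ((i:ℤ) - 1))))
        = A.updateRow 0 (fun j => z ^ (j : ℕ)) := by
      ext i j
      rw [Matrix.of_apply, Matrix.updateRow_apply]
      by_cases h : i = 0
      · subst h; simp
      · rw [if_neg h, if_neg h, hA, Matrix.submatrix_apply, id_eq]
        show s _ = s _
        congr 1
        have hσi : (σ i : Fin (m+2)) = i - 1 := rfl
        have hival : ((i - 1 : Fin (m+2)) : ℕ) = (i : ℕ) - 1 := by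
          rw [Fin.coe_sub_one, if_neg h]
        have h4 : 1 ≤ i.val := Nat.one_le_iff_ne_zero.mpr (fun hc => h (Fin.ext hc))
        rw [hσi, hival]
        omega
    rw [hmat]
    -- expand determinant by the first row via cramer
    have hdet : (A.updateRow 0 (fun j => z ^ (j:ℕ))).det
        = ∑ j : Fin (m+2), z ^ (j:ℕ) * Mv j := by
      rw [← Matrix.det_transpose, ← Matrix.updateCol_transpose, ← Matrix.cramer_apply]
      have hv : (fun j : Fin (m+2) => z ^ (j:ℕ))
          = ∑ j : Fin (m+2), z ^ (j:ℕ) • (Pi.single j 1 : Fin (m+2) → ℂ) := by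
        funext i
        rw [Finset.sum_apply]
        rw [Finset.sum_eq_single i]
        · simp
        · intro j _ hj
          simp [Pi.single_eq_of_ne (Ne.symm hj)]
        · intro h; exact absurd (Finset.mem_univ _) h
      rw [hv, map_sum]
      rw [Finset.sum_apply]
      refine Finset.sum_congr rfl (fun j _ => ?_)
      rw [LinearMap.map_smul]
      have hadj : Matrix.cramer Aᵀ (Pi.single j 1) 0 = A.adjugate j 0 := by
        rw [Matrix.adjugate_def]
        rfl
      rw [Pi.smul_apply, hadj, smul_eq_mul]
    rw [hdet, hp]
    rw [Polynomial.eval_finset_sum]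
    refine Finset.sum_congr rfl (fun j _ => ?_)
    rw [Polynomial.eval_mul, Polynomial.eval_C, Polynomial.eval_pow, Polynomial.eval_X, mul_comm]
  -- coefficient-vector identity for multiplication by (X - C a)
  have hvec : ∀ (q : Polynomial ℂ) (a : ℂ),
      (fun i : Fin (m+2) => (q * (Polynomial.X - Polynomial.C a)).coeff (i:ℕ))
        = sh (m+1) (fun i : Fin (m+2) => q.coeff (i:ℕ))
          - a • (fun i : Fin (m+2) => q.coeff (i:ℕ)) := by
    intro q a
    funext i
    simp only [Pi.sub_apply, Pi.smul_apply, smul_eq_mul]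
    refine Fin.cases ?_ ?_ i
    · have h0 : ((0 : Fin (m+2)) : ℕ) = 0 := rfl
      rw [h0, sh_zero, Polynomial.mul_coeff_zero]
      simp [Polynomial.coeff_sub]
      ring
    · intro j
      rw [sh_succ, Fin.val_succ, Polynomial.coeff_mul_X_sub_C, Fin.coe_castSucc]
      ring
  have F1 : ∀ f : Fin (m+2) → ℂ, Phi s (m+1) f Mv = 0 := by
    intro f
    show star f ⬝ᵥ (T s (m+1) *ᵥ Mv) = 0
    rw [hTnM, dotProduct_zero]
  have F2 : ∀ g : Fin (m+2) → ℂ, Phi s (m+1) Mv g = 0 := by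
    intro g
    show star Mv ⬝ᵥ (T s (m+1) *ᵥ g) = 0
    rw [Matrix.dotProduct_mulVec]
    have hherm' : (T s (m+1))ᴴ = T s (m+1) := T_herm hherm (m+1)
    have hkey : star Mv ᵥ* (T s (m+1)) = star ((T s (m+1))ᴴ *ᵥ Mv) := by
      rw [Matrix.star_mulVec, Matrix.conjTranspose_conjTranspose]
    rw [hkey, hherm', hTnM, star_zero, zero_dotProduct]
  have Fpos : ∀ f : Fin (m+2) → ℂ, f (Fin.last (m+1)) = 0 → f ≠ 0 →
      Phi s (m+1) f f ≠ 0 := fun f h1 h2 => Phi_pos hherm hTpos f h1 h2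
  -- all roots lie on the unit circle
  have habs : ∀ a : ℂ, a ∈ p.roots → a * (starRingEnd ℂ) a = 1 := by
    intro a ha
    have hroot : p.IsRoot a := ((Polynomial.mem_roots hpne).mp ha)
    obtain ⟨q, hq⟩ := Polynomial.dvd_iff_isRoot.mpr hroot
    rw [mul_comm] at hq
    have hqne : q ≠ 0 := by
      rintro rfl
      rw [zero_mul] at hq
      exact hpne hq
    have hqdeg : q.natDegree = m := by
      have h1 : p.natDegree = q.natDegree + 1 := by
        rw [hq, Polynomial.natDegree_mul hqne (Polynomial.X_sub_C_ne_zero a),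
          Polynomial.natDegree_X_sub_C]
      omega
    set u : Fin (m+2) → ℂ := fun i => q.coeff (i:ℕ) with hudef
    have hulast : u (Fin.last (m+1)) = 0 := by
      rw [hudef]
      show q.coeff ((Fin.last (m+1) : ℕ)) = 0
      rw [Fin.val_last]
      exact Polynomial.coeff_eq_zero_of_natDegree_lt (by omega)
    have hune : u ≠ 0 := by
      intro hc
      have h1 := congrFun hc (⟨m, by omega⟩ : Fin (m+2))
      rw [hudef] at h1
      simp only [Pi.zero_apply] at h1
      have h2 : q.coeff m ≠ 0 := by
        rw [← hqdeg, Polynomial.coeff_natDegree]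
        exact Polynomial.leadingCoeff_ne_zero.mpr hqne
      exact h2 h1
    have hMvu : Mv = sh (m+1) u - a • u := by
      funext i
      rw [← hcoeff i, hq]
      exact congrFun (hvec q a) i
    have eA : Phi s (m+1) Mv Mv
        = Phi s (m+1) (sh (m+1) u) Mv - star a * Phi s (m+1) u Mv := by
      have h1 : Phi s (m+1) Mv Mv = Phi s (m+1) (sh (m+1) u - a • u) Mv := by rw [hMvu]
      rw [h1, Phi_sub₁]
    have eB : Phi s (m+1) (sh (m+1) u) Mv = 0 := by
      have h1 := F1 Mv
      rw [eA, F1 u, mul_zero, sub_zero] at h1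
      exact h1
    have eC : Phi s (m+1) (sh (m+1) u) Mv
        = Phi s (m+1) u u - a * Phi s (m+1) (sh (m+1) u) u := by
      have h1 : Phi s (m+1) (sh (m+1) u) Mv
          = Phi s (m+1) (sh (m+1) u) (sh (m+1) u - a • u) := by rw [hMvu]
      rw [h1, Phi_sub₂, Phi_sh_sh (m+1) u u hulast hulast]
    have eD : Phi s (m+1) (sh (m+1) u) u = star a * Phi s (m+1) u u := by
      have h2 := F2 u
      rw [hMvu, Phi_sub₁] at h2
      exact sub_eq_zero.mp h2
    have hPuu := Fpos u hulast hune
    have hfin : (1 - a * star a) * Phi s (m+1) u u = 0 := by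
      linear_combination (-1 : ℂ) * eC + eB + a * eD
    rcases mul_eq_zero.mp hfin with h | h
    · have : a * star a = 1 := by linear_combination -h
      exact this
    · exact absurd h hPuu
  -- no repeated roots
  have hsimple : ∀ a : ℂ, ¬ ((Polynomial.X - Polynomial.C a)^2 ∣ p) := by
    intro a hdvd
    obtain ⟨r, hr⟩ := hdvd
    have hrne : r ≠ 0 := by
      rintro rfl
      rw [mul_zero] at hr
      exact hpne hr
    have hdeg2 : p.natDegree = 2 + r.natDegree := by
      rw [hr, Polynomial.natDegree_mul (pow_ne_zero 2 (Polynomial.X_sub_C_ne_zero a)) hrne,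
        Polynomial.natDegree_pow, Polynomial.natDegree_X_sub_C]
    have hrdeg : r.natDegree + 1 = m := by omega
    have haroot : a ∈ p.roots := by
      rw [Polynomial.mem_roots hpne]
      show p.eval a = 0
      rw [hr]
      simp
    have hconj : a * star a = 1 := habs a haroot
    set w : Fin (m+2) → ℂ := fun i => r.coeff (i:ℕ) with hwdef
    set q' : Polynomial ℂ := r * (Polynomial.X - Polynomial.C a) with hq'
    have hq'ne : q' ≠ 0 :=
      mul_ne_zero hrne (Polynomial.X_sub_C_ne_zero a)
    have hq'deg : q'.natDegree = m := by
      rw [hq', Polynomial.natDegree_mul hrne (Polynomial.X_sub_C_ne_zero a),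
        Polynomial.natDegree_X_sub_C]
      omega
    set u : Fin (m+2) → ℂ := fun i => q'.coeff (i:ℕ) with hudef
    have hu : u = sh (m+1) w - a • w := hvec r a
    have hp2 : p = q' * (Polynomial.X - Polynomial.C a) := by rw [hr, hq']; ring
    have hMvu : Mv = sh (m+1) u - a • u := by
      funext i
      rw [← hcoeff i, hp2]
      exact congrFun (hvec q' a) i
    have hwlast : w (Fin.last (m+1)) = 0 := by
      show r.coeff ((Fin.last (m+1) : ℕ)) = 0
      rw [Fin.val_last]
      exact Polynomial.coeff_eq_zero_of_natDegree_lt (by omega)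
    have hwm : w (Fin.castSucc (Fin.last m)) = 0 := by
      show r.coeff ((Fin.castSucc (Fin.last m) : ℕ)) = 0
      rw [Fin.coe_castSucc, Fin.val_last]
      exact Polynomial.coeff_eq_zero_of_natDegree_lt (by omega)
    have hshwlast : sh (m+1) w (Fin.last (m+1)) = 0 := by
      rw [← Fin.succ_last, sh_succ]
      exact hwm
    have hulast : u (Fin.last (m+1)) = 0 := by
      show q'.coeff ((Fin.last (m+1) : ℕ)) = 0
      rw [Fin.val_last]
      exact Polynomial.coeff_eq_zero_of_natDegree_lt (by omega)
    have hune : u ≠ 0 := by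
      intro hc
      have h1 := congrFun hc (⟨m, by omega⟩ : Fin (m+2))
      simp only [Pi.zero_apply] at h1
      have h2 : q'.coeff m ≠ 0 := by
        rw [← hq'deg, Polynomial.coeff_natDegree]
        exact Polynomial.leadingCoeff_ne_zero.mpr hq'ne
      exact h2 h1
    -- the three inner products
    set av : ℂ := Phi s (m+1) w w with hav
    set bv : ℂ := Phi s (m+1) (sh (m+1) w) w with hbv
    set cv : ℂ := Phi s (m+1) w (sh (m+1) w) with hcv
    have rel1 : Phi s (m+1) u w = bv - star a * av := by
      have h1 : Phi s (m+1) u w = Phi s (m+1) (sh (m+1) w - a • w) w := by rw [hu]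
      rw [h1, Phi_sub₁, hav, hbv]
    have rel2 : Phi s (m+1) u (sh (m+1) w) = av - star a * cv := by
      have h1 : Phi s (m+1) u (sh (m+1) w)
          = Phi s (m+1) (sh (m+1) w - a • w) (sh (m+1) w) := by rw [hu]
      rw [h1, Phi_sub₁, Phi_sh_sh (m+1) w w hwlast hwlast, hav, hcv]
    have rel3 : Phi s (m+1) (sh (m+1) u) (sh (m+1) w) = Phi s (m+1) u w :=
      Phi_sh_sh (m+1) u w hulast hwlast
    have rel4 : Phi s (m+1) (sh (m+1) u) (sh (m+1) w)
        - star a * Phi s (m+1) u (sh (m+1) w) = 0 := by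
      have h1 := F2 (sh (m+1) w)
      rw [hMvu, Phi_sub₁] at h1
      exact h1
    have hE : (bv - star a * av) - star a * (av - star a * cv) = 0 := by
      rw [← rel1, ← rel2, ← rel3]
      exact rel4
    -- expansion of Phi u u
    have exp1 : Phi s (m+1) (sh (m+1) w) u = av - a * bv := by
      have h1 : Phi s (m+1) (sh (m+1) w) u
          = Phi s (m+1) (sh (m+1) w) (sh (m+1) w - a • w) := by rw [hu]
      rw [h1, Phi_sub₂, Phi_sh_sh (m+1) w w hwlast hwlast, hav, hbv]
    have exp2 : Phi s (m+1) w u = cv - a * av := by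
      have h1 : Phi s (m+1) w u = Phi s (m+1) w (sh (m+1) w - a • w) := by rw [hu]
      rw [h1, Phi_sub₂, hav, hcv]
    have hPuu : Phi s (m+1) u u = (av - a * bv) - star a * (cv - a * av) := by
      have h1 : Phi s (m+1) u u = Phi s (m+1) (sh (m+1) w - a • w) u := by rw [← hu]
      rw [h1, Phi_sub₁, exp1, exp2]
    have hzero' : Phi s (m+1) u u = 0 := by
      rw [hPuu]
      linear_combination (-a) * hE - (av - star a * cv) * hconj
    exact Fpos u hulast hune hzero'
  -- assemble
  classical
  have habs1 : ∀ aa : ℂ, aa * (starRingEnd ℂ) aa = 1 → ‖aa‖ = 1 := by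
    intro aa h
    have h1 : (Complex.normSq aa : ℂ) = 1 := by rw [← Complex.mul_conj]; exact h
    have h2 : Complex.normSq aa = 1 := by exact_mod_cast h1
    have h3 : ‖aa‖ ^ 2 = 1 := by rw [Complex.sq_norm]; exact h2
    nlinarith [norm_nonneg aa]
  have hsplits : p.Splits := IsAlgClosed.splits p
  have hcard : Multiset.card p.roots = m + 1 := by
    have h1 := hsplits.natDegree_eq_card_roots
    omega
  have hnodup : p.roots.Nodup := by
    rw [Multiset.nodup_iff_count_le_one]
    intro a
    rw [Polynomial.count_roots]
    by_contra hgt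
    push_neg at hgt
    exact hsimple a (dvd_trans (pow_dvd_pow _ (by omega : 2 ≤ p.rootMultiplicity a))
      (Polynomial.pow_rootMultiplicity_dvd p a))
  set l : List ℂ := p.roots.toList with hl
  have hlen : l.length = m + 1 := by rw [hl, Multiset.length_toList, hcard]
  have hlnd : l.Nodup := by
    have h1 := hnodup
    rw [← Multiset.coe_toList p.roots] at h1
    exact Multiset.coe_nodup.mp h1
  refine ⟨fun r => l.get (Fin.cast hlen.symm r), p.leadingCoeff, ?_, ?_, ?_, ?_⟩
  · rw [Polynomial.leadingCoeff, hpdeg, hpcoeff_top]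
    exact hMvlast_ne
  · intro r1 r2 hr12
    have h1 := List.nodup_iff_injective_get.mp hlnd hr12
    have h2 : ((Fin.cast hlen.symm r1 : Fin l.length) : ℕ)
        = ((Fin.cast hlen.symm r2 : Fin l.length) : ℕ) := congrArg Fin.val h1
    exact Fin.ext h2
  · intro r
    apply habs1
    apply habs
    have h1 : l.get (Fin.cast hlen.symm r) ∈ l :=
      List.get_mem l (Fin.cast hlen.symm r)
    exact (Multiset.mem_toList).mp h1
  · intro z
    rw [hPeval z]
    have hfact := hsplits.eq_prod_roots
    conv_lhs => rw [hfact]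
    rw [Polynomial.eval_mul, Polynomial.eval_C]
    congr 1
    rw [Polynomial.eval_multiset_prod, Multiset.map_map]
    have hm : (Polynomial.eval z) ∘ (fun aa : ℂ => Polynomial.X - Polynomial.C aa)
        = fun aa : ℂ => z - aa := by
      funext aa
      simp
    rw [hm]
    have h1 : p.roots = (l : Multiset ℂ) := by rw [hl, Multiset.coe_toList]
    rw [h1, Multiset.map_coe, Multiset.prod_coe]
    have h2 : l.map (fun aa => z - aa) = List.ofFn (fun i : Fin l.length => z - l.get i) := by
      conv_lhs => rw [← List.ofFn_get l]
      rw [List.map_ofFn]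
      rfl
    rw [h2, List.prod_ofFn]
    exact Fintype.prod_equiv (finCongr hlen) _ _ (fun x => by congr 1)
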